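/- For t ≥ 2 and k ≥ 1, let G_{t,k} be the line graph of the multigraph obtained from the odd cycle C_{2t+1} by replacing each edge with k parallel edges. Then χ(G_{t,k}) = 2k + ⌈k/t⌉, Δ(G_{t,k}) = 3k − 1, and ω(G_{t,k}) = 2k. -/

import Mathlib

open SimpleGraph

/-- The blow-up of a graph `H` obtained by replacing each vertex with a copy of
`K_r`, joining all vertices of copies corresponding to adjacent vertices. -/
def blowup {α : Type*} (H : SimpleGraph α) (r : ℕ) : SimpleGraph (α × Fin r) where
  Adj x y := H.Adj x.1 y.1 ∨ (x.1 = y.1 ∧ x.2 ≠ y.2)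
  symm := by
    constructor
    rintro x y (h | ⟨h1, h2⟩)
    · exact Or.inl h.symm
    · exact Or.inr ⟨h1.symm, h2.symm⟩
  loopless := by constructor; rintro x (h | ⟨-, h2⟩); exacts [H.loopless.irrefl _ h, h2 rfl]

instance {α : Type*} [DecidableEq α] (H : SimpleGraph α) [DecidableRel H.Adj] (r : ℕ) :
    DecidableRel (blowup H r).Adj := fun _ _ => inferInstanceAs (Decidable (_ ∨ _))

/-- Catlin's graph `G_{t,k} = L(kC_{2t+1})`: the line graph of the odd cycle
`C_{2t+1}` with every edge given multiplicity `k`; equivalently, the blow-up of the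
cycle `C_{2t+1}` by `K_k`. -/
def catlin (t k : ℕ) : SimpleGraph (Fin (2 * t + 1) × Fin k) :=
  blowup (cycleGraph (2 * t + 1)) k

instance (t k : ℕ) : DecidableRel (catlin t k).Adj :=
  inferInstanceAs (DecidableRel (blowup (cycleGraph (2 * t + 1)) k).Adj)

private lemma mod_small' {x n : ℕ} (h : x < 2*n) :
    x % n = x ∨ (n ≤ x ∧ x % n = x - n) := by
  rcases Nat.lt_or_ge x n with h'|h'
  · exact Or.inl (Nat.mod_eq_of_lt h')
  · exact Or.inr ⟨h', by rw [Nat.mod_eq_sub_mod h', Nat.mod_eq_of_lt (by omega)]⟩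

private lemma catlin_adj {t k : ℕ} {x y : Fin (2*t+1) × Fin k} :
    (catlin t k).Adj x y ↔
      (cycleGraph (2*t+1)).Adj x.1 y.1 ∨ (x.1 = y.1 ∧ x.2 ≠ y.2) := Iff.rfl

private lemma cycle_adj_iff {t : ℕ} (ht : 1 ≤ t) {a b : Fin (2*t+1)} :
    (cycleGraph (2*t+1)).Adj a b ↔
      (b.val = a.val + 1 ∨ a.val = b.val + 1 ∨ (a.val = 2*t ∧ b.val = 0) ∨
        (b.val = 2*t ∧ a.val = 0)) := by
  have ha := a.isLt
  have hb := b.isLt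
  have e1 : (a - b).val = (2*t+1 - b.val + a.val) % (2*t+1) := by rw [Fin.sub_def]
  have e2 : (b - a).val = (2*t+1 - a.val + b.val) % (2*t+1) := by rw [Fin.sub_def]
  rw [cycleGraph_adj', e1, e2]
  have h1 := mod_small' (x := 2*t+1 - b.val + a.val) (n := 2*t+1) (by omega)
  have h2 := mod_small' (x := 2*t+1 - a.val + b.val) (n := 2*t+1) (by omega)
  rcases h1 with h1 | ⟨h1a, h1⟩ <;> rcases h2 with h2 | ⟨h2a, h2⟩ <;> rw [h1, h2] <;> omega

/-- the start of the colour interval used for cycle position `i` -/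
private def cs (k E : ℕ) (i : ℕ) : ℕ := i * k + min i E

private lemma color_step {t k q E : ℕ} (ht : 2 ≤ t) (hk : 1 ≤ k) (hq : 1 ≤ q)
    (hE : E + k = t*q) (hEt : E + 1 ≤ t) {a b j j' : ℕ}
    (hjk : j < k) (hj'k : j' < k) (hb : b = a + 1) :
    (cs k E a + j) % (2*k+q) ≠ (cs k E b + j') % (2*k+q) := by
  intro h
  set D := min b E - min a E with hD
  have hminb : min b E = min a E + D ∧ D ≤ 1 := by omega
  have hbk : b * k = a * k + k := by rw [hb]; ring
  have hsb : cs k E b + j' = (a * k + min a E) + ((k + D) + j') := by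
    unfold cs; omega
  have hsa : cs k E a + j = (a * k + min a E) + j := by unfold cs; omega
  rw [hsa, hsb] at h
  have hcan : j ≡ (k + D) + j' [MOD 2*k+q] := Nat.ModEq.add_left_cancel' _ h
  have h1 : j % (2*k+q) = j := Nat.mod_eq_of_lt (by omega)
  have h2 : ((k + D) + j') % (2*k+q) = (k+D) + j' := Nat.mod_eq_of_lt (by omega)
  unfold Nat.ModEq at hcan
  omega

private lemma color_wrap {t k q E : ℕ} (ht : 2 ≤ t) (hk : 1 ≤ k) (hq : 1 ≤ q)
    (hE : E + k = t*q) (hEt : E + 1 ≤ t) {j j' : ℕ}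
    (hjk : j < k) (hj'k : j' < k) :
    (cs k E (2*t) + j) % (2*k+q) ≠ (cs k E 0 + j') % (2*k+q) := by
  intro h
  obtain ⟨t', rfl⟩ : ∃ t', t = t' + 2 := ⟨t-2, by omega⟩
  have hmin : min (2*(t'+2)) E = E := by omega
  have hE' : E + k = t'*q + 2*q := by rw [hE]; ring
  have key : cs k E (2*(t'+2)) + j = (k + q + j) + (t'+1) * (2*k+q) := by
    unfold cs
    rw [hmin]
    have e1 : 2*(t'+2)*k = 2*(t'*k) + 4*k := by ring
    have e2 : (t'+1)*(2*k+q) = 2*(t'*k) + t'*q + 2*k + q := by ring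
    rw [e1, e2]
    linarith
  have hs0 : cs k E 0 + j' = j' := by unfold cs; omega
  rw [key, hs0, Nat.add_mul_mod_self_right,
    Nat.mod_eq_of_lt (show k + q + j < 2*k+q by omega),
    Nat.mod_eq_of_lt (show j' < 2*k+q by omega)] at h
  omega

private lemma indep_bound {t k : ℕ} (ht : 2 ≤ t) (S : Finset (Fin (2*t+1) × Fin k))
    (hS : ∀ x ∈ S, ∀ y ∈ S, x ≠ y → ¬ (catlin t k).Adj x y) : S.card ≤ t := by
  classical
  set I := S.image Prod.fst with hIdef
  have hinj : Set.InjOn Prod.fst (S : Set (Fin (2*t+1) × Fin k)) := by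
    intro x hx y hy hxy
    by_contra hne
    refine hS x hx y hy hne ?_
    refine Or.inr ⟨hxy, ?_⟩
    intro h2
    exact hne (Prod.ext hxy h2)
  have hcard : S.card = I.card := (Finset.card_image_of_injOn hinj).symm
  have hnext : ∀ a ∈ I, (⟨(a.val+1) % (2*t+1), Nat.mod_lt _ (by omega)⟩ : Fin (2*t+1)) ∉ I := by
    intro a ha hmem
    obtain ⟨x, hx, hx1⟩ := Finset.mem_image.1 ha
    obtain ⟨y, hy, hy1⟩ := Finset.mem_image.1 hmem
    have hav : ((a.val+1) % (2*t+1)) ≠ a.val := by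
      rcases mod_small' (x := a.val+1) (n := 2*t+1) (by omega) with h | ⟨h1, h2⟩ <;> omega
    have hne : x ≠ y := by
      intro h; rw [h] at hx1
      exact hav (congrArg Fin.val (hx1.symm.trans hy1)).symm
    refine hS x hx y hy hne (Or.inl ?_)
    rw [hx1, hy1, cycle_adj_iff (by omega)]
    have hisLt := a.isLt
    rcases mod_small' (x := a.val+1) (n := 2*t+1) (by omega) with h | ⟨h1, h2⟩
    · left
      show (a.val+1) % (2*t+1) = a.val + 1
      omega
    · right; right; left
      refine ⟨by omega, ?_⟩
      show (a.val+1) % (2*t+1) = 0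
      omega
  have hmaps : ∀ a ∈ I, (⟨(a.val+1) % (2*t+1), Nat.mod_lt _ (by omega)⟩ : Fin (2*t+1)) ∈ Iᶜ := by
    intro a ha; rw [Finset.mem_compl]; exact hnext a ha
  have hIle : I.card ≤ Iᶜ.card := by
    refine Finset.card_le_card_of_injOn _ hmaps ?_
    intro a ha b hb hab
    have := congrArg Fin.val hab
    simp only at this
    have ha' := a.isLt
    have hb' := b.isLt
    apply Fin.ext
    rcases mod_small' (x := a.val+1) (n := 2*t+1) (by omega) with h1 | ⟨h1a, h1⟩ <;>
      rcases mod_small' (x := b.val+1) (n := 2*t+1) (by omega) with h2 | ⟨h2a, h2⟩ <;> omega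
  have hcompl : Iᶜ.card = Fintype.card (Fin (2*t+1)) - I.card := Finset.card_compl I
  rw [Fintype.card_fin] at hcompl
  omega

private lemma clique_bound {t k : ℕ} (ht : 2 ≤ t) (S : Finset (Fin (2*t+1) × Fin k))
    (hS : (catlin t k).IsClique ↑S) : S.card ≤ 2*k := by
  classical
  set I := S.image Prod.fst with hIdef
  have hIadj : ∀ a ∈ I, ∀ b ∈ I, a ≠ b → (cycleGraph (2*t+1)).Adj a b := by
    intro a ha b hb hab
    obtain ⟨x, hx, hx1⟩ := Finset.mem_image.1 ha
    obtain ⟨y, hy, hy1⟩ := Finset.mem_image.1 hb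
    have hne : x ≠ y := by intro h; rw [h] at hx1; exact hab (hx1.symm.trans hy1)
    have := hS (Finset.mem_coe.2 hx) (Finset.mem_coe.2 hy) hne
    rcases catlin_adj.1 this with h | ⟨h1, -⟩
    · rwa [hx1, hy1] at h
    · exact absurd (hx1 ▸ hy1 ▸ h1) hab
  have hI2 : I.card ≤ 2 := by
    by_contra hgt
    obtain ⟨a, b, c, ha, hb, hc, hab, hac, hbc⟩ :=
      (Finset.two_lt_card_iff (s := I)).1 (by omega)
    have h1 := (cycle_adj_iff (by omega)).1 (hIadj a ha b hb hab)
    have h2 := (cycle_adj_iff (by omega)).1 (hIadj a ha c hc hac)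
    have h3 := (cycle_adj_iff (by omega)).1 (hIadj b hb c hc hbc)
    have hab' : a.val ≠ b.val := fun h => hab (Fin.ext h)
    have hac' : a.val ≠ c.val := fun h => hac (Fin.ext h)
    have hbc' : b.val ≠ c.val := fun h => hbc (Fin.ext h)
    have := a.isLt; have := b.isLt; have := c.isLt
    omega
  have hsub : S ⊆ I ×ˢ Finset.univ := by
    intro x hx
    rw [Finset.mem_product]
    exact ⟨Finset.mem_image_of_mem _ hx, Finset.mem_univ _⟩
  have h1 := Finset.card_le_card hsub
  rw [Finset.card_product, Finset.card_univ, Fintype.card_fin] at h1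
  exact h1.trans (Nat.mul_le_mul_right k hI2)

private lemma cycle_deg {t : ℕ} (ht : 2 ≤ t) (a : Fin (2*t+1)) :
    (cycleGraph (2*t+1)).degree a = 2 := by
  have ha := a.isLt
  have hb1 : (a.val+1) % (2*t+1) < 2*t+1 := Nat.mod_lt _ (by omega)
  have hb2 : (a.val+2*t) % (2*t+1) < 2*t+1 := Nat.mod_lt _ (by omega)
  set b1 : Fin (2*t+1) := ⟨(a.val+1) % (2*t+1), hb1⟩
  set b2 : Fin (2*t+1) := ⟨(a.val+2*t) % (2*t+1), hb2⟩
  have hm1 := mod_small' (x := a.val+1) (n := 2*t+1) (by omega)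
  have hm2 := mod_small' (x := a.val+2*t) (n := 2*t+1) (by omega)
  have hset : (cycleGraph (2*t+1)).neighborFinset a = {b1, b2} := by
    ext c
    rw [mem_neighborFinset, cycle_adj_iff (by omega), Finset.mem_insert, Finset.mem_singleton,
      Fin.ext_iff, Fin.ext_iff]
    have hc := c.isLt
    show _ ↔ c.val = (a.val+1) % (2*t+1) ∨ c.val = (a.val+2*t) % (2*t+1)
    rcases hm1 with h1 | ⟨h1a, h1⟩ <;> rcases hm2 with h2 | ⟨h2a, h2⟩ <;> rw [h1, h2] <;> omega
  rw [degree, hset, Finset.card_pair]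
  rw [Ne, Fin.ext_iff]
  show ¬ ((a.val+1) % (2*t+1) = (a.val+2*t) % (2*t+1))
  rcases hm1 with h1 | ⟨h1a, h1⟩ <;> rcases hm2 with h2 | ⟨h2a, h2⟩ <;> rw [h1, h2] <;> omega

private lemma degree_eq {t k : ℕ} (ht : 2 ≤ t) (hk : 1 ≤ k) (v : Fin (2*t+1) × Fin k) :
    (catlin t k).degree v = 3*k - 1 := by
  classical
  rw [degree, neighborFinset_eq_filter]
  have hsplit : Finset.filter (fun w => (catlin t k).Adj v w) Finset.univ =
      ((cycleGraph (2*t+1)).neighborFinset v.1 ×ˢ Finset.univ) ∪ ({v.1} ×ˢ {v.2}ᶜ) := by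
    ext w
    rw [Finset.mem_filter, catlin_adj, Finset.mem_union, Finset.mem_product, Finset.mem_product,
      mem_neighborFinset, Finset.mem_singleton, Finset.mem_compl, Finset.mem_singleton]
    constructor
    · rintro ⟨-, h | ⟨h1, h2⟩⟩
      · exact Or.inl ⟨h, Finset.mem_univ _⟩
      · exact Or.inr ⟨h1.symm, Ne.symm h2⟩
    · rintro (⟨h, -⟩ | ⟨h1, h2⟩)
      · exact ⟨Finset.mem_univ _, Or.inl h⟩
      · exact ⟨Finset.mem_univ _, Or.inr ⟨h1.symm, Ne.symm h2⟩⟩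
  rw [hsplit, Finset.card_union_of_disjoint, Finset.card_product, Finset.card_product,
    Finset.card_univ, Fintype.card_fin, Finset.card_singleton, Finset.card_compl,
    Finset.card_singleton, Fintype.card_fin, ← degree, cycle_deg ht]
  · omega
  · rw [Finset.disjoint_left]
    rintro w hw1 hw2
    rw [Finset.mem_product, mem_neighborFinset] at hw1
    rw [Finset.mem_product, Finset.mem_singleton] at hw2
    exact (cycleGraph (2*t+1)).loopless.irrefl v.1 (hw2.1 ▸ hw1.1)

/-- For `t ≥ 2` and `k ≥ 1`, Catlin's graph satisfies `χ = 2k + ⌈k/t⌉`,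
`Δ = 3k − 1` and `ω = 2k`. -/
theorem catlin_graph_invariants (t k : ℕ) (ht : 2 ≤ t) (hk : 1 ≤ k) :
    (catlin t k).chromaticNumber = ((2 * k + (k + t - 1) / t : ℕ) : ℕ∞) ∧
    (catlin t k).maxDegree = 3 * k - 1 ∧
    (catlin t k).cliqueNum = 2 * k := by
  classical
  obtain ⟨q, hq⟩ : ∃ q, (k + t - 1) / t = q := ⟨_, rfl⟩
  obtain ⟨A, hA⟩ : ∃ A, t * q = A := ⟨_, rfl⟩
  have hr1 : t * ((k+t-1)/t) + (k+t-1) % t = k+t-1 := Nat.div_add_mod _ _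
  have hr2 : (k+t-1) % t < t := Nat.mod_lt _ (by omega)
  rw [hq, hA] at hr1
  obtain ⟨r, hr⟩ : ∃ r, (k+t-1) % t = r := ⟨_, rfl⟩
  rw [hr] at hr1 hr2
  have hkA : k ≤ A := by omega
  have hAle : A + 1 ≤ k + t := by omega
  set E := A - k with hEdef
  have hE : E + k = t*q := by rw [hA]; omega
  have hEt : E + 1 ≤ t := by omega
  have hq1 : 1 ≤ q := by
    rcases Nat.eq_zero_or_pos q with h0 | h
    · rw [h0, Nat.mul_zero] at hA; omega
    · exact h
  have hm : 0 < 2*k+q := by omega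
  -- the coloring
  set f : Fin (2*t+1) × Fin k → Fin (2*k+q) :=
    fun x => ⟨(cs k E x.1.val + x.2.val) % (2*k+q), Nat.mod_lt _ hm⟩ with hf
  have hvalid : ∀ {x y}, (catlin t k).Adj x y → f x ≠ f y := by
    intro x y hadj hfeq
    have hfeq' : (cs k E x.1.val + x.2.val) % (2*k+q) =
        (cs k E y.1.val + y.2.val) % (2*k+q) := congrArg Fin.val hfeq
    have hj := x.2.isLt
    have hj' := y.2.isLt
    rcases catlin_adj.1 hadj with hcyc | ⟨h1, h2⟩
    · rcases (cycle_adj_iff (by omega)).1 hcyc with h | h | ⟨h3, h4⟩ | ⟨h3, h4⟩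
      · exact color_step ht hk hq1 hE hEt hj hj' h hfeq'
      · exact color_step ht hk hq1 hE hEt hj' hj h hfeq'.symm
      · rw [h3, h4] at hfeq'
        exact color_wrap ht hk hq1 hE hEt hj hj' hfeq'
      · rw [h3, h4] at hfeq'
        exact color_wrap ht hk hq1 hE hEt hj' hj hfeq'.symm
    · rw [h1] at hfeq'
      have hcan := Nat.ModEq.add_left_cancel' (n := 2*k+q) (cs k E y.1.val) hfeq'
      unfold Nat.ModEq at hcan
      rw [Nat.mod_eq_of_lt (by omega), Nat.mod_eq_of_lt (by omega)] at hcan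
      exact h2 (Fin.ext hcan)
  have hcol : (catlin t k).Colorable (2*k+q) := ⟨Coloring.mk f fun hadj => hvalid hadj⟩
  -- lower bound for the chromatic number
  have hlb : ∀ n, (catlin t k).Colorable n → 2*k+q ≤ n := by
    intro n hn
    obtain ⟨C⟩ := hn
    have hcount : (2*t+1) * k =
        ∑ c : Fin n, (Finset.univ.filter (fun v => C v = c)).card := by
      have h := Finset.card_eq_sum_card_fiberwise (f := C) (s := Finset.univ)
        (t := Finset.univ) (fun x _ => Finset.mem_univ _)
      rwa [Finset.card_univ, Fintype.card_prod, Fintype.card_fin, Fintype.card_fin] at h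
    have hfib : ∀ c : Fin n, (Finset.univ.filter (fun v => C v = c)).card ≤ t := by
      intro c
      refine indep_bound ht _ ?_
      intro x hx y hy hxy hadj
      rw [Finset.mem_filter] at hx hy
      exact C.valid hadj (hx.2.trans hy.2.symm)
    have hsum : ∑ c : Fin n, (Finset.univ.filter (fun v => C v = c)).card ≤ n * t := by
      calc ∑ c : Fin n, (Finset.univ.filter (fun v => C v = c)).card
          ≤ ∑ _c : Fin n, t := Finset.sum_le_sum (fun c _ => hfib c)
        _ = n * t := by
            rw [Finset.sum_const, Finset.card_univ, Fintype.card_fin, smul_eq_mul]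
    have h5 : (2*t+1)*k ≤ n*t := by rw [hcount]; exact hsum
    by_contra hlt
    push_neg at hlt
    have hmul : (n+1) * t ≤ (2*k+q) * t := Nat.mul_le_mul_right t (by omega)
    have e1 : (n+1)*t = n*t + t := by ring
    have e2 : (2*k+q)*t = 2*(t*k) + t*q := by ring
    have e3 : (2*t+1)*k = 2*(t*k) + k := by ring
    rw [e1, e2] at hmul
    rw [e3] at h5
    linarith
  have hchrom : (catlin t k).chromaticNumber = ((2*k+q : ℕ) : ℕ∞) := by
    refine le_antisymm hcol.chromaticNumber_le ?_
    rw [hcol.chromaticNumber_eq_sInf]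
    exact_mod_cast Nat.cast_le.2 (le_csInf (⟨2*k+q, hcol⟩ : {n' | (catlin t k).Colorable n'}.Nonempty) (fun n hn => hlb n hn))
  refine ⟨by rw [hq]; exact hchrom, ?_, ?_⟩
  -- max degree
  · apply le_antisymm
    · exact maxDegree_le_of_forall_degree_le _ _ (fun v => (degree_eq ht hk v).le)
    · have h := (catlin t k).degree_le_maxDegree (⟨0, by omega⟩, ⟨0, by omega⟩)
      rwa [degree_eq ht hk] at h
  -- clique number
  · apply le_antisymm
    · obtain ⟨s, hs⟩ := (catlin t k).exists_isNClique_cliqueNum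
      rw [← hs.card_eq]
      exact clique_bound ht s hs.isClique
    · set v0 : Fin (2*t+1) := ⟨0, by omega⟩ with hv0
      set v1 : Fin (2*t+1) := ⟨1, by omega⟩ with hv1
      set S : Finset (Fin (2*t+1) × Fin k) := ({v0, v1} : Finset _) ×ˢ Finset.univ with hSdef
      have hclique : (catlin t k).IsClique ↑S := by
        intro x hx y hy hxy
        rw [Finset.mem_coe, hSdef, Finset.mem_product, Finset.mem_insert,
          Finset.mem_singleton] at hx hy
        rw [catlin_adj]
        by_cases h1 : x.1 = y.1
        · exact Or.inr ⟨h1, fun h2 => hxy (Prod.ext h1 h2)⟩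
        · left
          rw [cycle_adj_iff (by omega)]
          rcases hx.1 with h | h <;> rcases hy.1 with h' | h'
          · exact absurd (h.trans h'.symm) h1
          · rw [h, h']; exact Or.inl rfl
          · rw [h, h']; exact Or.inr (Or.inl rfl)
          · exact absurd (h.trans h'.symm) h1
      have hcard : S.card = 2*k := by
        rw [hSdef, Finset.card_product, Finset.card_univ, Fintype.card_fin,
          Finset.card_pair (by
            intro h
            have := congrArg Fin.val h
            simp [hv0, hv1] at this)]
      calc 2*k = S.card := hcard.symm
        _ ≤ (catlin t k).cliqueNum := IsClique.card_le_cliqueNum (tc := hclique)
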